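/- arXiv:1807.01403 — 4 statements merged into one kernel-verified Lean document; each statement's English description precedes it below -/
import Mathlib

section
/- Suppose F : ℝ → ℝ is C¹, F(m) = F(M) = 0 with m < M, F > 0 on (m, M), F'(m) > 0 and F'(M) < 0. Then there exists a nonconstant periodic C¹ function φ : ℝ → ℝ with m ≤ φ ≤ M satisfying (φ')² = F(φ) everywhere. -/
open Filter

/-- Two simple zeros of F with F positive between them yield a smooth periodic wave. -/
theorem periodic_wave_existence (F : ℝ → ℝ) (m M : ℝ) (hmM : m < M)
    (hF : ContDiff ℝ 1 F)
    (hFm : F m = 0) (hFM : F M = 0)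
    (hFpos : ∀ x, m < x → x < M → 0 < F x)
    (hF'm : 0 < deriv F m) (hF'M : deriv F M < 0) :
    ∃ φ : ℝ → ℝ, ContDiff ℝ 1 φ ∧
      (∃ T : ℝ, 0 < T ∧ ∀ z, φ (z + T) = φ z) ∧
      (∃ z₁ z₂, φ z₁ ≠ φ z₂) ∧
      (∀ z, m ≤ φ z ∧ φ z ≤ M) ∧
      (∀ z, (deriv φ z) ^ 2 = F (φ z)) := by
  have hFd : Differentiable ℝ F := hF.differentiable one_ne_zero
  have hFc : Continuous F := hFd.continuous
  set r : ℝ := (M - m) / 2 with hr_def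
  have hr : 0 < r := by simp only [hr_def]; linarith
  set c : ℝ := (m + M) / 2 with hc_def
  have hcm : c - r = m := by simp only [hr_def, hc_def]; ring
  have hcM : c + r = M := by simp only [hr_def, hc_def]; ring
  set p : ℝ → ℝ := fun t => c + r * Real.sin t with hp_def
  have hpmem : ∀ t, p t ∈ Set.Icc m M := by
    intro t
    have h1 := Real.neg_one_le_sin t
    have h2 := Real.sin_le_one t
    constructor
    · simp only [hp_def]; nlinarith
    · simp only [hp_def]; nlinarith
  -- the factor g
  set g : ℝ → ℝ := fun x => if x = m then deriv F m / (M - m)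
    else if x = M then -deriv F M / (M - m)
    else F x / ((x - m) * (M - x)) with hg_def
  have hfact : ∀ x ∈ Set.Icc m M, F x = (x - m) * (M - x) * g x := by
    rintro x ⟨h1, h2⟩
    rcases eq_or_lt_of_le h1 with h | h
    · subst h; simp [hFm]
    rcases eq_or_lt_of_le h2 with h' | h'
    · subst h'; simp [hFM]
    · have hx1 : x ≠ m := ne_of_gt h
      have hx2 : x ≠ M := ne_of_lt h'
      have hne : (x - m) * (M - x) ≠ 0 :=
        mul_ne_zero (sub_ne_zero.mpr hx1) (sub_ne_zero.mpr hx2.symm)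
      simp only [hg_def, if_neg hx1, if_neg hx2]
      rw [mul_comm ((x - m) * (M - x)), div_mul_cancel₀ _ hne]
  have hgpos : ∀ x ∈ Set.Icc m M, 0 < g x := by
    rintro x ⟨h1, h2⟩
    rcases eq_or_lt_of_le h1 with h | h
    · have hgx : g x = deriv F m / (M - m) := by
        simp only [hg_def]; rw [if_pos h.symm]
      rw [hgx]
      exact div_pos hF'm (by linarith)
    rcases eq_or_lt_of_le h2 with h' | h'
    · have hgx : g x = -deriv F M / (M - m) := by
        simp only [hg_def]
        rw [if_neg (by rw [h']; exact hmM.ne'), if_pos h']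
      rw [hgx]
      exact div_pos (by linarith) (by linarith)
    · simp only [hg_def, if_neg (ne_of_gt h), if_neg (ne_of_lt h')]
      exact div_pos (hFpos x h h') (by nlinarith)
  -- continuity of g on [m, M]
  have hslope_m : Filter.Tendsto (slope F m) (nhdsWithin m {m}ᶜ) (nhds (deriv F m)) :=
    hasDerivAt_iff_tendsto_slope.mp (hFd m).hasDerivAt
  have hslope_M : Filter.Tendsto (slope F M) (nhdsWithin M {M}ᶜ) (nhds (deriv F M)) :=
    hasDerivAt_iff_tendsto_slope.mp (hFd M).hasDerivAt
  have hgcont : ContinuousOn g (Set.Icc m M) := by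
    intro x hx
    rcases eq_or_lt_of_le hx.1 with h | h
    · -- at x = m
      rw [← h]
      rw [← continuousWithinAt_diff_self]
      have hsub : Set.Icc m M \ {m} ⊆ {m}ᶜ := fun y hy => hy.2
      have hmono : nhdsWithin m (Set.Icc m M \ {m}) ≤ nhdsWithin m {m}ᶜ :=
        nhdsWithin_mono m hsub
      have h1 : Filter.Tendsto (fun y => slope F m y * (M - y)⁻¹)
          (nhdsWithin m (Set.Icc m M \ {m})) (nhds (deriv F m * (M - m)⁻¹)) := by
        apply Filter.Tendsto.mul (hslope_m.mono_left hmono)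
        exact ((continuous_const.sub continuous_id).continuousAt.inv₀
          (by simp; linarith)).continuousWithinAt
      have heq : ∀ᶠ y in nhdsWithin m (Set.Icc m M \ {m}),
          slope F m y * (M - y)⁻¹ = g y := by
        filter_upwards [self_mem_nhdsWithin,
          eventually_nhdsWithin_of_eventually_nhds
            (eventually_lt_nhds hmM)] with y hy hyM
        have hym : y ≠ m := hy.2
        have hyM' : y ≠ M := ne_of_lt hyM
        simp only [hg_def, if_neg hym, if_neg hyM', slope_def_field, hFm]
        rw [sub_zero, ← div_eq_mul_inv, div_div]
      have : Filter.Tendsto g (nhdsWithin m (Set.Icc m M \ {m}))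
          (nhds (deriv F m * (M - m)⁻¹)) := h1.congr' heq
      have hgm : g m = deriv F m * (M - m)⁻¹ := by
        simp [hg_def, div_eq_mul_inv]
      rw [ContinuousWithinAt, hgm]
      exact this
    rcases eq_or_lt_of_le hx.2 with h' | h'
    · -- at x = M
      rw [h']
      rw [← continuousWithinAt_diff_self]
      have hsub : Set.Icc m M \ {M} ⊆ {M}ᶜ := fun y hy => hy.2
      have hmono : nhdsWithin M (Set.Icc m M \ {M}) ≤ nhdsWithin M {M}ᶜ :=
        nhdsWithin_mono M hsub
      have h1 : Filter.Tendsto (fun y => slope F M y * (-(y - m)⁻¹))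
          (nhdsWithin M (Set.Icc m M \ {M})) (nhds (deriv F M * (-(M - m)⁻¹))) := by
        apply Filter.Tendsto.mul (hslope_M.mono_left hmono)
        exact (((continuous_id.sub continuous_const).continuousAt.inv₀
          (by simp; linarith)).neg).continuousWithinAt
      have heq : ∀ᶠ y in nhdsWithin M (Set.Icc m M \ {M}),
          slope F M y * (-(y - m)⁻¹) = g y := by
        filter_upwards [self_mem_nhdsWithin,
          eventually_nhdsWithin_of_eventually_nhds
            (eventually_gt_nhds hmM)] with y hy hym
        have hyM : y ≠ M := hy.2
        have hym' : y ≠ m := ne_of_gt hym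
        simp only [hg_def, if_neg hym', if_neg hyM, slope_def_field, hFM]
        rw [sub_zero, mul_neg, ← div_eq_mul_inv, div_div, ← div_neg]
        congr 1
        ring
      have : Filter.Tendsto g (nhdsWithin M (Set.Icc m M \ {M}))
          (nhds (deriv F M * (-(M - m)⁻¹))) := h1.congr' heq
      have hgM : g M = deriv F M * (-(M - m)⁻¹) := by
        simp only [hg_def]
        rw [if_neg hmM.ne']
        norm_num
        ring
      rw [ContinuousWithinAt, hgM]
      exact this
    · -- interior point
      have hx1 : x ≠ m := ne_of_gt h
      have hx2 : x ≠ M := ne_of_lt h'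
      have hopen : Set.Ioo m M ∈ nhds x := (isOpen_Ioo).mem_nhds ⟨h, h'⟩
      have heq : ∀ᶠ y in nhds x, F y / ((y - m) * (M - y)) = g y := by
        filter_upwards [hopen] with y hy
        simp [hg_def, if_neg (ne_of_gt hy.1), if_neg (ne_of_lt hy.2)]
      have hca : ContinuousAt (fun y => F y / ((y - m) * (M - y))) x := by
        apply ContinuousAt.div (hFc.continuousAt)
        · fun_prop
        · have := sub_ne_zero.mpr hx1.symm
          have := sub_ne_zero.mpr hx2
          intro hcon
          rcases mul_eq_zero.mp hcon with h0 | h0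
          · exact (sub_ne_zero.mpr hx1) h0
          · exact (sub_ne_zero.mpr hx2.symm) (by linarith [h0] : M - x = 0)
      exact ((hca.congr heq).continuousWithinAt)
  -- G, the positive continuous periodic function
  set G : ℝ → ℝ := fun t => g (p t) with hG_def
  have hGcont : Continuous G := hgcont.comp_continuous (by fun_prop) hpmem
  have hGpos : ∀ t, 0 < G t := fun t => hgpos _ (hpmem t)
  have hpper : ∀ t, p (t + 2 * Real.pi) = p t := by
    intro t; simp [hp_def, Real.sin_add_two_pi]
  have hGper : Function.Periodic G (2 * Real.pi) := fun t => by
    simp only [hG_def]; rw [hpper]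
  -- the integrand w
  set w : ℝ → ℝ := fun t => (Real.sqrt (G t))⁻¹ with hw_def
  have hwpos : ∀ t, 0 < w t := fun t => by
    simp only [hw_def]
    exact inv_pos.mpr (Real.sqrt_pos.mpr (hGpos t))
  have hwcont : Continuous w := by
    apply Continuous.inv₀ (Real.continuous_sqrt.comp hGcont)
    exact fun t => ne_of_gt (Real.sqrt_pos.mpr (hGpos t))
  have hwper : Function.Periodic w (2 * Real.pi) := fun t => by
    simp only [hw_def]; rw [hGper]
  -- the time map H
  set H : ℝ → ℝ := fun θ => ∫ t in (0:ℝ)..θ, w t with hH_def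
  have hHd : ∀ a, HasDerivAt H (w a) a := fun a =>
    (hwcont.integral_hasStrictDerivAt 0 a).hasDerivAt
  have hHcont : Continuous H :=
    Differentiable.continuous fun a => (hHd a).differentiableAt
  have hHmono : StrictMono H := strictMono_of_deriv_pos fun x => by
    rw [(hHd x).deriv]; exact hwpos x
  set T : ℝ := H (2 * Real.pi) with hT_def
  have hpipos : (0:ℝ) < 2 * Real.pi := by positivity
  have hH0 : H 0 = 0 := by simp [hH_def]
  have hT : 0 < T := by
    have := hHmono hpipos
    rwa [hH0] at this
  have hint : ∀ a b : ℝ, IntervalIntegrable w MeasureTheory.volume a b :=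
    fun a b => hwcont.intervalIntegrable a b
  have hHadd : ∀ θ : ℝ, H (θ + 2 * Real.pi) = H θ + T := by
    intro θ
    have h1 : (∫ t in (0:ℝ)..θ, w t) + ∫ t in θ..(θ + 2 * Real.pi), w t
        = ∫ t in (0:ℝ)..(θ + 2 * Real.pi), w t :=
      intervalIntegral.integral_add_adjacent_intervals (hint 0 θ) (hint θ _)
    have h2 : (∫ t in θ..(θ + 2 * Real.pi), w t) = ∫ t in (0:ℝ)..(0 + 2 * Real.pi), w t :=
      hwper.intervalIntegral_add_eq θ 0
    simp only [hH_def, hT_def]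
    rw [← h1, h2, zero_add]
  have hHaddn : ∀ n : ℕ, H (2 * Real.pi * n) = n * T := by
    intro n
    induction n with
    | zero => simpa using hH0
    | succ k ih =>
      have : 2 * Real.pi * ((k : ℝ) + 1) = 2 * Real.pi * k + 2 * Real.pi := by ring
      push_cast
      rw [this, hHadd, ih]
      ring
  have hHsubn : ∀ n : ℕ, H (-(2 * Real.pi * n)) = -(n * T) := by
    intro n
    induction n with
    | zero => simpa using hH0
    | succ k ih =>
      have h1 : -(2 * Real.pi * ((k:ℝ) + 1)) + 2 * Real.pi = -(2 * Real.pi * k) := by ring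
      have := hHadd (-(2 * Real.pi * ((k:ℝ) + 1)))
      rw [h1, ih] at this
      push_cast
      linarith
  have htop : Filter.Tendsto H Filter.atTop Filter.atTop := by
    apply Monotone.tendsto_atTop_atTop hHmono.monotone
    intro b
    obtain ⟨n, hn⟩ := exists_nat_ge (b / T)
    refine ⟨2 * Real.pi * n, ?_⟩
    rw [hHaddn]
    calc b = b / T * T := by field_simp
    _ ≤ n * T := by
        apply mul_le_mul_of_nonneg_right hn hT.le
  have hbot : Filter.Tendsto H Filter.atBot Filter.atBot := by
    apply Monotone.tendsto_atBot_atBot hHmono.monotone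
    intro b
    obtain ⟨n, hn⟩ := exists_nat_ge (-b / T)
    refine ⟨-(2 * Real.pi * n), ?_⟩
    rw [hHsubn]
    have : -b ≤ n * T := by
      calc -b = -b / T * T := by field_simp
      _ ≤ n * T := mul_le_mul_of_nonneg_right hn hT.le
    linarith
  have hHsurj : Function.Surjective H := hHcont.surjective htop hbot
  -- the inverse ψ
  set e : ℝ ≃o ℝ := StrictMono.orderIsoOfSurjective H hHmono hHsurj with he_def
  set ψ : ℝ → ℝ := fun z => e.symm z with hψ_def
  have heH : ∀ t, e t = H t := fun t => rfl
  have hHψ : ∀ z, H (ψ z) = z := fun z => by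
    simp only [hψ_def, ← heH]; exact e.apply_symm_apply z
  have hψH : ∀ t, ψ (H t) = t := fun t => by
    simp only [hψ_def, ← heH]; exact e.symm_apply_apply t
  have hψcont : Continuous ψ := by
    simp only [hψ_def]
    exact (OrderIso.continuous e.symm)
  have hψd : ∀ z, HasDerivAt ψ (Real.sqrt (G (ψ z))) z := by
    intro z
    have h1 : HasDerivAt ψ ((w (ψ z))⁻¹) z := by
      apply HasDerivAt.of_local_left_inverse hψcont.continuousAt (hHd (ψ z))
        (ne_of_gt (hwpos _))
      exact Filter.Eventually.of_forall hHψ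
    simpa only [hw_def, inv_inv] using h1
  -- φ and its properties
  set φ : ℝ → ℝ := fun z => c + r * Real.sin (ψ z) with hφ_def
  have hφd : ∀ z, HasDerivAt φ (r * (Real.cos (ψ z) * Real.sqrt (G (ψ z)))) z := by
    intro z
    have h1 : HasDerivAt (fun z => Real.sin (ψ z))
        (Real.cos (ψ z) * Real.sqrt (G (ψ z))) z :=
      (Real.hasDerivAt_sin (ψ z)).comp z (hψd z)
    simpa only [hφ_def] using (h1.const_mul r).const_add c
  have hφderiv : ∀ z, deriv φ z = r * (Real.cos (ψ z) * Real.sqrt (G (ψ z))) :=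
    fun z => (hφd z).deriv
  refine ⟨φ, ?_, ⟨T, hT, ?_⟩, ⟨H (Real.pi / 2), H (-(Real.pi / 2)), ?_⟩, ?_, ?_⟩
  · -- C¹
    rw [contDiff_one_iff_deriv]
    refine ⟨fun z => (hφd z).differentiableAt, ?_⟩
    have : deriv φ = fun z => r * (Real.cos (ψ z) * Real.sqrt (G (ψ z))) :=
      funext hφderiv
    rw [this]
    exact continuous_const.mul ((Real.continuous_cos.comp hψcont).mul
      (Real.continuous_sqrt.comp (hGcont.comp hψcont)))
  · -- periodic
    intro z
    have hψper : ψ (z + T) = ψ z + 2 * Real.pi := by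
      apply hHmono.injective
      rw [hHψ, hHadd, hHψ]
    simp only [hφ_def, hψper, Real.sin_add_two_pi]
  · -- nonconstant
    simp only [hφ_def, hψH, Real.sin_pi_div_two, Real.sin_neg, mul_one]
    intro hcon
    have : (2:ℝ) * r = 0 := by linarith
    have : r = 0 := by linarith
    linarith
  · -- bounds
    intro z
    have h1 := Real.neg_one_le_sin (ψ z)
    have h2 := Real.sin_le_one (ψ z)
    constructor
    · simp only [hφ_def]; nlinarith
    · simp only [hφ_def]; nlinarith
  · -- the ODE
    intro z
    rw [hφderiv]
    have hmem : φ z ∈ Set.Icc m M := by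
      have h1 := Real.neg_one_le_sin (ψ z)
      have h2 := Real.sin_le_one (ψ z)
      constructor
      · simp only [hφ_def]; nlinarith
      · simp only [hφ_def]; nlinarith
    have hFφ : F (φ z) = (φ z - m) * (M - φ z) * g (φ z) := hfact _ hmem
    have hsq : Real.sqrt (G (ψ z)) ^ 2 = G (ψ z) := Real.sq_sqrt (hGpos _).le
    have hpφ : φ z = p (ψ z) := rfl
    have hGφ : G (ψ z) = g (φ z) := by rw [hpφ]
    have hprod : (φ z - m) * (M - φ z) = r ^ 2 * Real.cos (ψ z) ^ 2 := by
      have hs := Real.sin_sq_add_cos_sq (ψ z)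
      simp only [hφ_def]
      rw [← hcm, ← hcM]
      linear_combination (-(r ^ 2)) * hs
    rw [hFφ, hprod, mul_pow, mul_pow, hsq, hGφ]
    ring
end

section
/- Suppose F : ℝ → ℝ is C¹ on a neighborhood of [m, ∞), F(m) = 0, F'(m) ≠ 0, and F(φ) > 0 for all φ > m. Then there is no bounded C¹ solution φ : ℝ → ℝ of (φ')² = F(φ) with φ(z) > m for all z and φ nonconstant. -/
lemma aux_increasing (F : ℝ → ℝ) (m : ℝ) (hcont : ContinuousOn F (Set.Ici m))
    (hFpos : ∀ x, m < x → 0 < F x)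
    (φ : ℝ → ℝ) (hφ : ContDiff ℝ 1 φ)
    (hode : ∀ z, (deriv φ z) ^ 2 = F (φ z))
    (hgt : ∀ z, m < φ z)
    (hpos : ∀ z, 0 < deriv φ z)
    (C : ℝ) (hbd : ∀ z, |φ z| ≤ C) : False := by
  have hmono : StrictMono φ := strictMono_of_deriv_pos hpos
  have hbdd : BddAbove (Set.range φ) := ⟨C, by rintro _ ⟨z, rfl⟩; exact (abs_le.1 (hbd z)).2⟩
  set L := ⨆ z, φ z with hLdef
  have htend : Filter.Tendsto φ Filter.atTop (nhds L) :=
    tendsto_atTop_ciSup hmono.monotone hbdd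
  have hL : m < L := lt_of_lt_of_le (hgt 0) (le_ciSup hbdd 0)
  have hFL : 0 < F L := hFpos L hL
  have hcontL : ContinuousAt F L := hcont.continuousAt (Ici_mem_nhds hL)
  have htendF : Filter.Tendsto (fun z => (deriv φ z) ^ 2) Filter.atTop (nhds (F L)) := by
    have := hcontL.tendsto.comp htend
    simpa [Function.comp_def, hode] using this
  have hev : ∀ᶠ z in Filter.atTop, F L / 2 < (deriv φ z) ^ 2 :=
    htendF.eventually (eventually_gt_nhds (half_lt_self hFL))
  obtain ⟨Z, hZ⟩ := Filter.eventually_atTop.1 hev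
  set c := Real.sqrt (F L / 2) with hc
  have hc0 : 0 < c := Real.sqrt_pos.2 (by linarith)
  have hderiv : ∀ x, Z ≤ x → c ≤ deriv φ x := by
    intro x hx
    have h1 : c ≤ Real.sqrt ((deriv φ x) ^ 2) := Real.sqrt_le_sqrt (le_of_lt (hZ x hx))
    rwa [Real.sqrt_sq_eq_abs, abs_of_pos (hpos x)] at h1
  have hgrow := Convex.mul_sub_le_image_sub_of_le_deriv (convex_Ici Z)
    (hφ.continuous.continuousOn) ((hφ.differentiable one_ne_zero).differentiableOn)
    (fun x hx => hderiv x (le_of_lt (by simpa using hx)))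
  set y := Z + (2 * C + 1) / c with hy
  have hZy : Z ≤ y := by
    have : 0 ≤ (2 * C + 1) / c := by
      apply div_nonneg _ hc0.le
      have h0 : (0:ℝ) ≤ C := le_trans (abs_nonneg _) (hbd 0)
      linarith
    rw [hy]; linarith
  have hkey : c * (y - Z) ≤ φ y - φ Z := hgrow Z Set.self_mem_Ici y hZy hZy
  have hcy : c * (y - Z) = 2 * C + 1 := by
    rw [hy]; field_simp; ring
  have h1 := (abs_le.1 (hbd y)).2
  have h2 := (abs_le.1 (hbd Z)).1
  linarith

/-- Item 3 of Lenells' analysis: one simple zero with F positive above it gives no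
bounded nonconstant solution. -/
theorem no_bounded_wave_above_simple_zero (F : ℝ → ℝ) (m : ℝ)
    (hF : ContDiffOn ℝ 1 F (Set.Ici m))
    (hFm : F m = 0) (hF'm : deriv F m ≠ 0)
    (hFpos : ∀ x, m < x → 0 < F x) :
    ¬ ∃ φ : ℝ → ℝ, ContDiff ℝ 1 φ ∧
        (∀ z, (deriv φ z) ^ 2 = F (φ z)) ∧
        (∀ z, m < φ z) ∧
        (∃ z₁ z₂, φ z₁ ≠ φ z₂) ∧
        (∃ C : ℝ, ∀ z, |φ z| ≤ C) := by
  rintro ⟨φ, hφ, hode, hgt, -, C, hbd⟩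
  have hcont : ContinuousOn F (Set.Ici m) := hF.continuousOn
  have hne : ∀ z, deriv φ z ≠ 0 := by
    intro z h
    have := hode z
    rw [h] at this
    have := hFpos (φ z) (hgt z)
    simp at *; linarith
  have hdc : Continuous (deriv φ) := hφ.continuous_deriv le_rfl
  -- constant sign
  have hsign : (∀ z, 0 < deriv φ z) ∨ (∀ z, deriv φ z < 0) := by
    rcases lt_or_gt_of_ne (hne 0) with h0 | h0
    · right
      intro z
      by_contra h
      push_neg at h
      have hz : 0 < deriv φ z := lt_of_le_of_ne h (Ne.symm (hne z))
      have : (0:ℝ) ∈ Set.uIcc (deriv φ 0) (deriv φ z) :=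
        Set.mem_uIcc.2 (Or.inl ⟨h0.le, hz.le⟩)
      obtain ⟨c, -, hc⟩ := intermediate_value_uIcc (hdc.continuousOn) this
      exact hne c hc
    · left
      intro z
      by_contra h
      push_neg at h
      have hz : deriv φ z < 0 := lt_of_le_of_ne h (hne z)
      have : (0:ℝ) ∈ Set.uIcc (deriv φ 0) (deriv φ z) :=
        Set.mem_uIcc.2 (Or.inr ⟨hz.le, h0.le⟩)
      obtain ⟨c, -, hc⟩ := intermediate_value_uIcc (hdc.continuousOn) this
      exact hne c hc
  rcases hsign with hpos | hneg
  · exact aux_increasing F m hcont hFpos φ hφ hode hgt hpos C hbd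
  · set ψ : ℝ → ℝ := fun z => φ (-z) with hψ
    have hψC : ContDiff ℝ 1 ψ := hφ.comp (contDiff_neg)
    have hdψ : ∀ z, deriv ψ z = -deriv φ (-z) := fun z => by
      simpa using deriv_comp_neg φ z
    exact aux_increasing F m hcont hFpos ψ hψC
      (fun z => by rw [hdψ z]; simpa using hode (-z))
      (fun z => hgt (-z))
      (fun z => by rw [hdψ z]; linarith [hneg (-z)])
      C (fun z => hbd (-z))
end

section
/- Let F(φ) = (1/α²)·(φ - m)²(M - φ)/(c̃ - φ) with α ≠ 0 and z₀ = m < M = c̃ (double zero at m). Then F(φ) = (1/α²)(φ - m)² for all φ ≠ c̃, and the function φ(z) = m + (c̃ - m)e^{-|z|/|α|} satisfies (φ')² = F(φ) for all z ≠ 0, is continuous on ℝ with φ(0) = c̃, and tends to m exponentially as z → ±∞. -/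
open Filter

lemma peakon_deriv_aux (m ct a : ℝ) (ha : a ≠ 0) (z : ℝ) (hz : z ≠ 0) :
    deriv (fun z : ℝ => m + (ct - m) * Real.exp (-|z| / |a|)) z
      = -(Real.sign z) * ((ct - m) * Real.exp (-|z| / |a|)) / |a| := by
  have ha' : |a| ≠ 0 := abs_ne_zero.mpr ha
  rcases lt_or_gt_of_ne hz with h | h
  · have heq : (fun z : ℝ => m + (ct - m) * Real.exp (-|z| / |a|))
        =ᶠ[nhds z] (fun z : ℝ => m + (ct - m) * Real.exp (z / |a|)) := by
      filter_upwards [Iio_mem_nhds h] with x hx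
      rw [abs_of_neg hx]; ring_nf
    rw [heq.deriv_eq, Real.sign_of_neg h, abs_of_neg h]
    have : HasDerivAt (fun z : ℝ => m + (ct - m) * Real.exp (z / |a|))
        ((ct - m) * (Real.exp (z / |a|) * (1 / |a|))) z := by
      have h1 : HasDerivAt (fun z : ℝ => z / |a|) (1 / |a|) z :=
        (hasDerivAt_id z).div_const |a|
      simpa using ((h1.exp).const_mul (ct - m)).const_add m
    rw [this.deriv]; field_simp
  · have heq : (fun z : ℝ => m + (ct - m) * Real.exp (-|z| / |a|))
        =ᶠ[nhds z] (fun z : ℝ => m + (ct - m) * Real.exp (-z / |a|)) := by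
      filter_upwards [Ioi_mem_nhds h] with x hx
      rw [abs_of_pos hx]
    rw [heq.deriv_eq, Real.sign_of_pos h, abs_of_pos h]
    have : HasDerivAt (fun z : ℝ => m + (ct - m) * Real.exp (-z / |a|))
        ((ct - m) * (Real.exp (-z / |a|) * (-1 / |a|))) z := by
      have h1 : HasDerivAt (fun z : ℝ => -z / |a|) (-1 / |a|) z :=
        ((hasDerivAt_id z).neg.div_const |a|)
      simpa using ((h1.exp).const_mul (ct - m)).const_add m
    rw [this.deriv]; field_simp

/-- Explicit peakon with decay for the DGH equation. -/
theorem peakon_with_decay (α m ct : ℝ) (hα : α ≠ 0) (hm : m < ct) :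
    (∀ x : ℝ, x ≠ ct →
      (1 / α ^ 2) * ((x - m) ^ 2 * (ct - x) / (ct - x)) = (1 / α ^ 2) * (x - m) ^ 2) ∧
    (∀ z : ℝ, z ≠ 0 →
      (deriv (fun z : ℝ => m + (ct - m) * Real.exp (-|z| / |α|)) z) ^ 2
        = (1 / α ^ 2) * ((m + (ct - m) * Real.exp (-|z| / |α|)) - m) ^ 2) ∧
    Continuous (fun z : ℝ => m + (ct - m) * Real.exp (-|z| / |α|)) ∧
    (m + (ct - m) * Real.exp (-|(0 : ℝ)| / |α|) = ct) ∧
    (∃ C > (0 : ℝ), ∃ lam > (0 : ℝ), ∀ z : ℝ,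
      |(m + (ct - m) * Real.exp (-|z| / |α|)) - m| ≤ C * Real.exp (-lam * |z|)) ∧
    Tendsto (fun z : ℝ => m + (ct - m) * Real.exp (-|z| / |α|)) atTop (nhds m) ∧
    Tendsto (fun z : ℝ => m + (ct - m) * Real.exp (-|z| / |α|)) atBot (nhds m) := by
  have hα' : |α| ≠ 0 := abs_ne_zero.mpr hα
  have hα2 : α ^ 2 ≠ 0 := pow_ne_zero 2 hα
  have habs : |α| ^ 2 = α ^ 2 := sq_abs α
  refine ⟨?_, ?_, ?_, ?_, ?_, ?_, ?_⟩
  · intro x hx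
    rw [mul_div_assoc, div_self (sub_ne_zero.mpr (Ne.symm hx)), mul_one]
  · intro z hz
    rw [peakon_deriv_aux m ct α hα z hz]
    have hs : (Real.sign z) ^ 2 = 1 := by
      rcases lt_or_gt_of_ne hz with h | h
      · rw [Real.sign_of_neg h]; norm_num
      · rw [Real.sign_of_pos h]; norm_num
    field_simp
    rw [hs, habs]; ring
  · exact continuous_const.add (continuous_const.mul
      ((continuous_abs.neg.div_const _).rexp))
  · simp
  · refine ⟨ct - m, sub_pos.mpr hm, 1 / |α|, by positivity, fun z => ?_⟩
    rw [add_sub_cancel_left, abs_mul, abs_of_pos (Real.exp_pos _),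
      abs_of_pos (sub_pos.mpr hm)]
    have : -|z| / |α| = -(1 / |α|) * |z| := by field_simp
    rw [this]
  · have : Tendsto (fun z : ℝ => -|z| / |α|) atTop atBot := by
      apply Tendsto.atBot_div_const (abs_pos.mpr hα)
      exact tendsto_neg_atBot_iff.mpr (tendsto_abs_atTop_atTop)
    have h2 := Real.tendsto_exp_atBot.comp this
    have h3 : Tendsto (fun z : ℝ => m + (ct - m) * Real.exp (-|z| / |α|)) atTop (nhds (m + (ct - m) * 0)) :=
      tendsto_const_nhds.add (h2.const_mul (ct - m))
    simpa using h3
  · have : Tendsto (fun z : ℝ => -|z| / |α|) atBot atBot := by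
      apply Tendsto.atBot_div_const (abs_pos.mpr hα)
      exact tendsto_neg_atBot_iff.mpr (tendsto_abs_atBot_atTop)
    have h2 := Real.tendsto_exp_atBot.comp this
    have h3 : Tendsto (fun z : ℝ => m + (ct - m) * Real.exp (-|z| / |α|)) atBot (nhds (m + (ct - m) * 0)) :=
      tendsto_const_nhds.add (h2.const_mul (ct - m))
    simpa using h3
end

section
/- The function φ(z) = m + (M - m)·sech²(√((M - m)/(4γ))·z), defined for γ > 0 and z₀ = m < M with z₀ = c - c₀ - M - m (equivalently c - c₀ = M + 2m), satisfies (φ')² = (1/γ)(M - φ)(φ - m)² for all z ∈ ℝ, together with φ(0) = M, m < φ(z) ≤ M, and φ(z) → m as z → ±∞. -/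
open Filter Real

lemma cosh_tendsto_atTop : Tendsto Real.cosh atTop atTop := by
  apply tendsto_atTop_mono (f := fun x => Real.exp x / 2)
  · intro x
    rw [Real.cosh_eq]
    have := Real.exp_pos (-x)
    linarith
  · exact Real.tendsto_exp_atTop.atTop_div_const two_pos

lemma sech_sq_deriv (k : ℝ) (z : ℝ) :
    HasDerivAt (fun z : ℝ => (1 / Real.cosh (k * z)) ^ 2)
      (-2 * k * Real.sinh (k * z) / (Real.cosh (k * z)) ^ 3) z := by
  have h1 : HasDerivAt (fun z : ℝ => Real.cosh (k * z)) (Real.sinh (k * z) * k) z :=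
    (Real.hasDerivAt_cosh (k * z)).comp z (by simpa using (hasDerivAt_id z).const_mul k)
  have hc := Real.cosh_pos (k * z)
  have h2 := (h1.inv hc.ne').pow 2
  have h3 : (fun z : ℝ => (1 / Real.cosh (k * z)) ^ 2) = (fun z => Real.cosh (k * z))⁻¹ ^ 2 := by
    ext x; simp [one_div]
  rw [h3]
  refine h2.congr_deriv ?_
  simp only [Pi.inv_apply]
  field_simp
  have h4 : Real.cosh (k * z) * (1 / Real.cosh (k * z)) ^ (2 - 1) = 1 := by norm_num [hc.ne']
  linear_combination (-(2:ℝ) * k * Real.sinh (k * z)) * h4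


lemma tendsto_sech_limit {l : Filter ℝ} {u : ℝ → ℝ} (m Mm : ℝ)
    (hu : Tendsto u l atTop) :
    Tendsto (fun z => m + Mm * (1 / Real.cosh (u z)) ^ 2) l (nhds m) := by
  have h1 : Tendsto (fun z => Real.cosh (u z)) l atTop := cosh_tendsto_atTop.comp hu
  have h2 : Tendsto (fun z => (1 / Real.cosh (u z)) ^ 2) l (nhds 0) := by
    simpa using ((h1.inv_tendsto_atTop).pow 2).congr (fun z => by simp [one_div])
  have := (h2.const_mul Mm).const_add m
  simpa using this

/-- Explicit KdV solitary wave realizing the smooth-with-decay case. -/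
theorem kdv_solitary_wave (γ m M c c₀ : ℝ) (hγ : 0 < γ) (hmM : m < M)
    (hc : c - c₀ = M + 2 * m) :
    (∀ z : ℝ,
      (deriv (fun z : ℝ =>
          m + (M - m) * (1 / Real.cosh (Real.sqrt ((M - m) / (4 * γ)) * z)) ^ 2) z) ^ 2
        = (1 / γ)
          * (M - (m + (M - m) * (1 / Real.cosh (Real.sqrt ((M - m) / (4 * γ)) * z)) ^ 2))
          * ((m + (M - m) * (1 / Real.cosh (Real.sqrt ((M - m) / (4 * γ)) * z)) ^ 2) - m) ^ 2) ∧
    (m + (M - m) * (1 / Real.cosh (Real.sqrt ((M - m) / (4 * γ)) * 0)) ^ 2 = M) ∧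
    (∀ z : ℝ,
      m < m + (M - m) * (1 / Real.cosh (Real.sqrt ((M - m) / (4 * γ)) * z)) ^ 2 ∧
      m + (M - m) * (1 / Real.cosh (Real.sqrt ((M - m) / (4 * γ)) * z)) ^ 2 ≤ M) ∧
    Tendsto (fun z : ℝ =>
        m + (M - m) * (1 / Real.cosh (Real.sqrt ((M - m) / (4 * γ)) * z)) ^ 2)
      atTop (nhds m) ∧
    Tendsto (fun z : ℝ =>
        m + (M - m) * (1 / Real.cosh (Real.sqrt ((M - m) / (4 * γ)) * z)) ^ 2)
      atBot (nhds m) := by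
  set k := Real.sqrt ((M - m) / (4 * γ)) with hk_def
  have hMm : 0 < M - m := sub_pos.mpr hmM
  have harg : 0 < (M - m) / (4 * γ) := div_pos hMm (by linarith)
  have hk : 0 < k := Real.sqrt_pos.mpr harg
  have hk2 : k ^ 2 = (M - m) / (4 * γ) := Real.sq_sqrt harg.le
  refine ⟨?_, ?_, ?_, ?_, ?_⟩
  · intro z
    have hd := (((sech_sq_deriv k z).const_mul (M - m)).const_add m).deriv
    rw [hd]
    set s := Real.sinh (k * z)
    set cc := Real.cosh (k * z) with hcc
    have hcpos : 0 < cc := Real.cosh_pos _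
    have hs : s ^ 2 = cc ^ 2 - 1 := Real.sinh_sq _
    have h1 : ((M - m) * (-2 * k * s / cc ^ 3)) ^ 2
        = (M - m) ^ 2 * (4 * k ^ 2) * s ^ 2 / cc ^ 6 := by ring
    rw [h1, hk2, hs]
    field_simp
    ring
  · rw [mul_zero, Real.cosh_zero]
    norm_num
  · intro z
    have hcpos : 0 < Real.cosh (k * z) := Real.cosh_pos _
    have h1 : (1 : ℝ) ≤ Real.cosh (k * z) := Real.one_le_cosh _
    have hsq : 0 < (1 / Real.cosh (k * z)) ^ 2 := by positivity
    have hle : (1 / Real.cosh (k * z)) ^ 2 ≤ 1 := by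
      rw [div_pow, one_pow, div_le_one (by positivity)]
      nlinarith
    constructor
    · nlinarith
    · nlinarith
  · exact tendsto_sech_limit m (M - m) (tendsto_id.const_mul_atTop hk)
  · have hbot : Tendsto (fun z : ℝ => -(k * z)) atBot atTop := by
      have : Tendsto (fun z : ℝ => k * z) atBot atBot := tendsto_id.const_mul_atBot hk
      exact tendsto_neg_atBot_atTop.comp this
    have := tendsto_sech_limit (u := fun z : ℝ => -(k * z)) m (M - m) hbot
    simpa [Real.cosh_neg] using this
end
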